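/- Let m = 3, r ∈ ℕ, and λ ∈ ℂ. Let W_{r,λ} denote the set of vertex functions f on C_3^N supported in Σ_r with A_- f = 0 and A_0 f = λ • f, and let V_{r,λ} be the ℂ-linear span of {A_+^k f : k ∈ ℕ, f ∈ W_{r,λ}}. Then V_{r,λ} is invariant under the adjacency operator: for every g ∈ V_{r,λ}, A g ∈ V_{r,λ}. -/
import Mathlib


open Finset

/-- The standard generator `e_k` of `(ZMod m)^N`: equal to `1` in coordinate `k`,
`0` elsewhere. -/
def eV (N m : ℕ) (k : Fin N) : Fin N → ZMod m :=
  fun j => if j = k then 1 else 0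

/-- Adjacency in the Cayley graph `C_m^N`: `v ∼ w` iff `w = v + e_k` or `w = v - e_k`
for some coordinate `k`. -/
def adj (N m : ℕ) (v w : Fin N → ZMod m) : Prop :=
  ∃ k : Fin N, w = v + eV N m k ∨ w = v - eV N m k

/-- The `k`-th level of a vertex: `d_k(v) = min((v k).val, m - (v k).val)`. -/
def lev (N m : ℕ) (v : Fin N → ZMod m) (k : Fin N) : ℕ :=
  min ((v k).val) (m - (v k).val)

/-- Path distance of a vertex to the origin: `d(v) = Σ_k d_k(v)`. -/
def distO (N m : ℕ) (v : Fin N → ZMod m) : ℕ :=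
  ∑ k : Fin N, lev N m v k

open Classical in
/-- Adjacency operator: `(A f)(v) = Σ_{w ∼ v} f(w)`. -/
noncomputable def Aop (N m : ℕ) [NeZero m] (f : (Fin N → ZMod m) → ℂ) :
    (Fin N → ZMod m) → ℂ :=
  fun v => ∑ w : Fin N → ZMod m, if adj N m v w then f w else 0

open Classical in
/-- Outer adjacency: `(A₊ f)(v) = Σ_{w ∼ v, d(w) < d(v)} f(w)`. -/
noncomputable def Aplus (N m : ℕ) [NeZero m] (f : (Fin N → ZMod m) → ℂ) :
    (Fin N → ZMod m) → ℂ :=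
  fun v => ∑ w : Fin N → ZMod m,
    if adj N m v w ∧ distO N m w < distO N m v then f w else 0

open Classical in
/-- Inner adjacency: `(A₋ f)(v) = Σ_{w ∼ v, d(w) > d(v)} f(w)`. -/
noncomputable def Aminus (N m : ℕ) [NeZero m] (f : (Fin N → ZMod m) → ℂ) :
    (Fin N → ZMod m) → ℂ :=
  fun v => ∑ w : Fin N → ZMod m,
    if adj N m v w ∧ distO N m v < distO N m w then f w else 0

open Classical in
/-- Neutral adjacency: `(A₀ f)(v) = Σ_{w ∼ v, d(w) = d(v)} f(w)`. -/
noncomputable def Azero (N m : ℕ) [NeZero m] (f : (Fin N → ZMod m) → ℂ) :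
    (Fin N → ZMod m) → ℂ :=
  fun v => ∑ w : Fin N → ZMod m,
    if adj N m v w ∧ distO N m w = distO N m v then f w else 0

/-- The `k`-reflection `ṽ_k` of a vertex: negate the `k`-th coordinate. -/
def reflV (N m : ℕ) (k : Fin N) (v : Fin N → ZMod m) : Fin N → ZMod m :=
  Function.update v k (-(v k))

/-- Level-one reflection sum: `(R₁ f)(v) = Σ_{k : d_k(v) = 1} f(ṽ_k)`. -/
noncomputable def R1 (N m : ℕ) (f : (Fin N → ZMod m) → ℂ) :
    (Fin N → ZMod m) → ℂ :=
  fun v => ∑ k ∈ Finset.univ.filter (fun k => lev N m v k = 1), f (reflV N m k v)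

/-- Number of coordinates of `v` at level `ℓ`. -/
def cardLev (N m : ℕ) (v : Fin N → ZMod m) (ℓ : ℕ) : ℕ :=
  (Finset.univ.filter (fun k => lev N m v k = ℓ)).card

/-- `W_{r,λ}`: vertex functions supported in `Σ_r`, in the kernel of `A₋`,
that are `λ`-eigenvectors of `A₀`. -/
def Wspace (N r : ℕ) (lam : ℂ) : Set ((Fin N → ZMod 3) → ℂ) :=
  {f | (∀ v, distO N 3 v ≠ r → f v = 0) ∧ Aminus N 3 f = 0 ∧ Azero N 3 f = lam • f}

/-- `V_{r,λ}`: the span of `{A₊^k f : k ∈ ℕ, f ∈ W_{r,λ}}`. -/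
noncomputable def Vspace (N r : ℕ) (lam : ℂ) : Submodule ℂ ((Fin N → ZMod 3) → ℂ) :=
  Submodule.span ℂ {g | ∃ k : ℕ, ∃ f ∈ Wspace N r lam, g = (Aplus N 3)^[k] f}

section Aux

open Finset Function

variable {N : ℕ}

lemma zmod3_cases : ∀ a : ZMod 3, a = 0 ∨ a = 1 ∨ a = 2 := by decide

lemma lev_eq (v : Fin N → ZMod 3) (k : Fin N) :
    lev N 3 v k = if v k = 0 then 0 else 1 := by
  rcases zmod3_cases (v k) with h | h | h <;> simp [lev, h] <;> decide

lemma distO_eq_card (v : Fin N → ZMod 3) :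
    distO N 3 v = (Finset.univ.filter fun k => v k ≠ 0).card := by
  classical
  rw [Finset.card_filter]
  exact Finset.sum_congr rfl fun k _ => by
    rw [lev_eq]; by_cases h : v k = 0 <;> simp [h]

lemma distO_update (v : Fin N → ZMod 3) (k : Fin N) (a : ZMod 3) :
    distO N 3 (Function.update v k a) + lev N 3 v k
      = distO N 3 v + min a.val (3 - a.val) := by
  classical
  unfold distO
  have h1 : ∀ j, lev N 3 (Function.update v k a) j
      = Function.update (fun j => lev N 3 v j) k (min a.val (3 - a.val)) j := by
    intro j
    rcases eq_or_ne j k with rfl | hj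
    · simp [lev, Function.update_self]
    · simp [lev, Function.update_of_ne hj]
  rw [Finset.sum_congr rfl fun j _ => h1 j,
    Finset.sum_update_of_mem (Finset.mem_univ k)]
  have h2 : ∑ j, lev N 3 v j
      = lev N 3 v k + ∑ j ∈ Finset.univ.erase k, lev N 3 v j :=
    (Finset.add_sum_erase _ _ (Finset.mem_univ k)).symm
  rw [h2, show (Finset.univ \ {k} : Finset (Fin N)) = Finset.univ.erase k by
    rw [Finset.erase_eq]]
  ring

lemma add_eV (v : Fin N → ZMod 3) (k : Fin N) :
    v + eV N 3 k = Function.update v k (v k + 1) := by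
  funext j
  rcases eq_or_ne j k with rfl | hj
  · simp [eV, Function.update_self]
  · simp [eV, Function.update_of_ne hj, hj]

lemma sub_eV (v : Fin N → ZMod 3) (k : Fin N) :
    v - eV N 3 k = Function.update v k (v k - 1) := by
  funext j
  rcases eq_or_ne j k with rfl | hj
  · simp [eV, Function.update_self]
  · simp [eV, Function.update_of_ne hj, hj]

lemma eV_apply_self (k : Fin N) : eV N 3 k k = 1 := by simp [eV]

lemma eV_apply_ne {k j : Fin N} (h : j ≠ k) : eV N 3 k j = 0 := by simp [eV, h]

lemma add_eV_inj (v : Fin N → ZMod 3) {k j : Fin N}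
    (h : v + eV N 3 k = v + eV N 3 j) : k = j := by
  by_contra hkj
  have h1 := congrFun h k
  simp only [Pi.add_apply, eV_apply_self, eV_apply_ne hkj] at h1
  exact one_ne_zero (add_left_cancel h1)

lemma sub_eV_inj (v : Fin N → ZMod 3) {k j : Fin N}
    (h : v - eV N 3 k = v - eV N 3 j) : k = j := by
  by_contra hkj
  have h1 := congrFun h k
  simp only [Pi.sub_apply, eV_apply_self, eV_apply_ne hkj, sub_eq_add_neg] at h1
  have h2 := add_left_cancel h1
  revert h2; decide

lemma add_eV_ne_sub_eV (v : Fin N → ZMod 3) (k j : Fin N) :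
    v + eV N 3 k ≠ v - eV N 3 j := by
  intro h
  have h1 := congrFun h k
  rcases eq_or_ne k j with rfl | hkj
  · simp only [Pi.add_apply, Pi.sub_apply, eV_apply_self, sub_eq_add_neg] at h1
    have h2 := add_left_cancel h1
    revert h2; decide
  · simp only [Pi.add_apply, Pi.sub_apply, eV_apply_self,
      eV_apply_ne hkj, sub_zero] at h1
    have h2 : v k + 1 = v k + 0 := by rw [h1, add_zero]
    exact one_ne_zero (add_left_cancel h2)

open Classical in
lemma sum_adj (v : Fin N → ZMod 3) (F : (Fin N → ZMod 3) → ℂ) :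
    (∑ w : Fin N → ZMod 3, if adj N 3 v w then F w else 0)
      = ∑ k : Fin N, (F (v + eV N 3 k) + F (v - eV N 3 k)) := by
  classical
  set g : Fin N × Bool → (Fin N → ZMod 3) :=
    fun p => if p.2 then v + eV N 3 p.1 else v - eV N 3 p.1 with hg
  have hinj : ∀ p ∈ (Finset.univ : Finset (Fin N × Bool)), ∀ q ∈ Finset.univ,
      g p = g q → p = q := by
    rintro ⟨k, bk⟩ - ⟨j, bj⟩ - h
    cases bk <;> cases bj <;> simp only [hg, if_pos, if_neg, Bool.false_eq_true,
      ite_true, ite_false] at h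
    · exact congrArg (·, false) (sub_eV_inj v h)
    · exact absurd h.symm (add_eV_ne_sub_eV v j k)
    · exact absurd h (add_eV_ne_sub_eV v k j)
    · exact congrArg (·, true) (add_eV_inj v h)
  have himg : Finset.univ.filter (fun w => adj N 3 v w) = Finset.univ.image g := by
    ext w
    rw [Finset.mem_filter, Finset.mem_image]
    constructor
    · rintro ⟨-, k, h | h⟩
      · exact ⟨(k, true), Finset.mem_univ _, h.symm⟩
      · exact ⟨(k, false), Finset.mem_univ _, h.symm⟩
    · rintro ⟨⟨k, b⟩, -, h⟩
      refine ⟨Finset.mem_univ _, ?_⟩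
      cases b
      · exact ⟨k, Or.inr h.symm⟩
      · exact ⟨k, Or.inl h.symm⟩
  calc (∑ w : Fin N → ZMod 3, if adj N 3 v w then F w else 0)
      = ∑ w ∈ Finset.univ.filter (fun w => adj N 3 v w), F w := by
        rw [Finset.sum_filter]
    _ = ∑ p : Fin N × Bool, F (g p) := by
        rw [himg, Finset.sum_image hinj]
    _ = ∑ k : Fin N, (F (v + eV N 3 k) + F (v - eV N 3 k)) := by
        rw [Fintype.sum_prod_type]
        exact Finset.sum_congr rfl fun k _ => by
          rw [Fintype.sum_bool]; rfl

end Aux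
section Conc

open Finset Function

variable {N : ℕ}

lemma distO_update_zero (v : Fin N → ZMod 3) {k : Fin N} (h : v k ≠ 0) :
    distO N 3 (Function.update v k 0) + 1 = distO N 3 v := by
  have h1 := distO_update v k 0
  rw [lev_eq, if_neg h] at h1
  simpa using h1

lemma distO_update_ne (v : Fin N → ZMod 3) {k : Fin N} (h : v k ≠ 0) (a : ZMod 3)
    (ha : a ≠ 0) : distO N 3 (Function.update v k a) = distO N 3 v := by
  have h1 := distO_update v k a
  rw [lev_eq, if_neg h] at h1
  rcases zmod3_cases a with h2 | h2 | h2
  · exact absurd h2 ha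
  · subst h2
    rw [show ZMod.val (1 : ZMod 3) ⊓ (3 - ZMod.val (1 : ZMod 3)) = 1 from by decide] at h1
    omega
  · subst h2
    rw [show ZMod.val (2 : ZMod 3) ⊓ (3 - ZMod.val (2 : ZMod 3)) = 1 from by decide] at h1
    omega

lemma distO_update_eqz (v : Fin N → ZMod 3) {k : Fin N} (h : v k = 0) (a : ZMod 3)
    (ha : a ≠ 0) : distO N 3 (Function.update v k a) = distO N 3 v + 1 := by
  have h1 := distO_update v k a
  rw [lev_eq, if_pos h] at h1
  rcases zmod3_cases a with h2 | h2 | h2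
  · exact absurd h2 ha
  · subst h2
    rw [show ZMod.val (1 : ZMod 3) ⊓ (3 - ZMod.val (1 : ZMod 3)) = 1 from by decide] at h1
    omega
  · subst h2
    rw [show ZMod.val (2 : ZMod 3) ⊓ (3 - ZMod.val (2 : ZMod 3)) = 1 from by decide] at h1
    omega

open Classical in
lemma aplus_eq (f : (Fin N → ZMod 3) → ℂ) (v : Fin N → ZMod 3) :
    Aplus N 3 f v
      = ∑ k ∈ Finset.univ.filter (fun k => v k ≠ 0), f (Function.update v k 0) := by
  classical
  rw [Finset.sum_filter]
  show (∑ w : Fin N → ZMod 3,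
      if adj N 3 v w ∧ distO N 3 w < distO N 3 v then f w else 0) = _
  simp only [ite_and]
  rw [sum_adj v (fun w => if distO N 3 w < distO N 3 v then f w else 0)]
  apply Finset.sum_congr rfl
  intro k _
  rw [add_eV, sub_eV]
  rcases zmod3_cases (v k) with h | h | h
  · rw [h, show (0 + 1 : ZMod 3) = 1 from by decide, show (0 - 1 : ZMod 3) = 2 from by decide]
    have e1 : distO N 3 (Function.update v k 1) = distO N 3 v + 1 :=
      distO_update_eqz v h 1 (by decide)
    have e2 : distO N 3 (Function.update v k 2) = distO N 3 v + 1 :=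
      distO_update_eqz v h 2 (by decide)
    rw [if_neg (show ¬ (distO N 3 (Function.update v k 1) < distO N 3 v) by omega), if_neg (show ¬ (distO N 3 (Function.update v k 2) < distO N 3 v) by omega),
      if_neg (show ¬ ((0 : ZMod 3) ≠ 0) by decide)]
    try ring
  · rw [h, show (1 + 1 : ZMod 3) = 2 from by decide, show (1 - 1 : ZMod 3) = 0 from by decide]
    have hne : v k ≠ 0 := by rw [h]; decide
    have e1 : distO N 3 (Function.update v k 2) = distO N 3 v :=
      distO_update_ne v hne 2 (by decide)
    have e2 : distO N 3 (Function.update v k 0) + 1 = distO N 3 v :=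
      distO_update_zero v hne
    rw [if_neg (show ¬ (distO N 3 (Function.update v k 2) < distO N 3 v) by omega), if_pos (show distO N 3 (Function.update v k 0) < distO N 3 v by omega),
      if_pos (show (1 : ZMod 3) ≠ 0 by decide)]
    try ring
  · rw [h, show (2 + 1 : ZMod 3) = 0 from by decide, show (2 - 1 : ZMod 3) = 1 from by decide]
    have hne : v k ≠ 0 := by rw [h]; decide
    have e1 : distO N 3 (Function.update v k 0) + 1 = distO N 3 v :=
      distO_update_zero v hne
    have e2 : distO N 3 (Function.update v k 1) = distO N 3 v :=
      distO_update_ne v hne 1 (by decide)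
    rw [if_pos (show distO N 3 (Function.update v k 0) < distO N 3 v by omega), if_neg (show ¬ (distO N 3 (Function.update v k 1) < distO N 3 v) by omega),
      if_pos (show (2 : ZMod 3) ≠ 0 by decide)]
    try ring

open Classical in
lemma azero_eq (f : (Fin N → ZMod 3) → ℂ) (v : Fin N → ZMod 3) :
    Azero N 3 f v
      = ∑ k ∈ Finset.univ.filter (fun k => v k ≠ 0), f (reflV N 3 k v) := by
  classical
  rw [Finset.sum_filter]
  show (∑ w : Fin N → ZMod 3,
      if adj N 3 v w ∧ distO N 3 w = distO N 3 v then f w else 0) = _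
  simp only [ite_and]
  rw [sum_adj v (fun w => if distO N 3 w = distO N 3 v then f w else 0)]
  apply Finset.sum_congr rfl
  intro k _
  rw [add_eV, sub_eV]
  rcases zmod3_cases (v k) with h | h | h
  · rw [h, show (0 + 1 : ZMod 3) = 1 from by decide, show (0 - 1 : ZMod 3) = 2 from by decide]
    have e1 : distO N 3 (Function.update v k 1) = distO N 3 v + 1 :=
      distO_update_eqz v h 1 (by decide)
    have e2 : distO N 3 (Function.update v k 2) = distO N 3 v + 1 :=
      distO_update_eqz v h 2 (by decide)
    rw [if_neg (show ¬ (distO N 3 (Function.update v k 1) = distO N 3 v) by omega), if_neg (show ¬ (distO N 3 (Function.update v k 2) = distO N 3 v) by omega),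
      if_neg (show ¬ ((0 : ZMod 3) ≠ 0) by decide)]
    try ring
  · rw [h, show (1 + 1 : ZMod 3) = 2 from by decide, show (1 - 1 : ZMod 3) = 0 from by decide]
    have hne : v k ≠ 0 := by rw [h]; decide
    have hrefl : reflV N 3 k v = Function.update v k 2 := by
      rw [reflV, h, show -(1 : ZMod 3) = 2 from by decide]
    rw [hrefl]
    have e1 : distO N 3 (Function.update v k 2) = distO N 3 v :=
      distO_update_ne v hne 2 (by decide)
    have e2 : distO N 3 (Function.update v k 0) + 1 = distO N 3 v :=
      distO_update_zero v hne
    rw [if_pos (show distO N 3 (Function.update v k 2) = distO N 3 v by omega), if_neg (show ¬ (distO N 3 (Function.update v k 0) = distO N 3 v) by omega),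
      if_pos (show (1 : ZMod 3) ≠ 0 by decide)]
    try ring
  · rw [h, show (2 + 1 : ZMod 3) = 0 from by decide, show (2 - 1 : ZMod 3) = 1 from by decide]
    have hne : v k ≠ 0 := by rw [h]; decide
    have hrefl : reflV N 3 k v = Function.update v k 1 := by
      rw [reflV, h, show -(2 : ZMod 3) = 1 from by decide]
    rw [hrefl]
    have e1 : distO N 3 (Function.update v k 0) + 1 = distO N 3 v :=
      distO_update_zero v hne
    have e2 : distO N 3 (Function.update v k 1) = distO N 3 v :=
      distO_update_ne v hne 1 (by decide)
    rw [if_neg (show ¬ (distO N 3 (Function.update v k 0) = distO N 3 v) by omega), if_pos (show distO N 3 (Function.update v k 1) = distO N 3 v by omega),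
      if_pos (show (2 : ZMod 3) ≠ 0 by decide)]
    try ring

open Classical in
lemma aminus_eq (f : (Fin N → ZMod 3) → ℂ) (v : Fin N → ZMod 3) :
    Aminus N 3 f v
      = ∑ k ∈ Finset.univ.filter (fun k => v k = 0),
          (f (Function.update v k 1) + f (Function.update v k 2)) := by
  classical
  rw [Finset.sum_filter]
  show (∑ w : Fin N → ZMod 3,
      if adj N 3 v w ∧ distO N 3 v < distO N 3 w then f w else 0) = _
  simp only [ite_and]
  rw [sum_adj v (fun w => if distO N 3 v < distO N 3 w then f w else 0)]
  apply Finset.sum_congr rfl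
  intro k _
  rw [add_eV, sub_eV]
  rcases zmod3_cases (v k) with h | h | h
  · rw [h, show (0 + 1 : ZMod 3) = 1 from by decide, show (0 - 1 : ZMod 3) = 2 from by decide]
    have e1 : distO N 3 (Function.update v k 1) = distO N 3 v + 1 :=
      distO_update_eqz v h 1 (by decide)
    have e2 : distO N 3 (Function.update v k 2) = distO N 3 v + 1 :=
      distO_update_eqz v h 2 (by decide)
    rw [if_pos (show distO N 3 v < distO N 3 (Function.update v k 1) by omega), if_pos (show distO N 3 v < distO N 3 (Function.update v k 2) by omega),
      if_pos (show (0 : ZMod 3) = 0 from rfl)]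
    try ring
  · rw [h, show (1 + 1 : ZMod 3) = 2 from by decide, show (1 - 1 : ZMod 3) = 0 from by decide]
    have hne : v k ≠ 0 := by rw [h]; decide
    have e1 : distO N 3 (Function.update v k 2) = distO N 3 v :=
      distO_update_ne v hne 2 (by decide)
    have e2 : distO N 3 (Function.update v k 0) + 1 = distO N 3 v :=
      distO_update_zero v hne
    rw [if_neg (show ¬ (distO N 3 v < distO N 3 (Function.update v k 2)) by omega), if_neg (show ¬ (distO N 3 v < distO N 3 (Function.update v k 0)) by omega),
      if_neg (show ¬ ((1 : ZMod 3) = 0) by decide)]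
    try ring
  · rw [h, show (2 + 1 : ZMod 3) = 0 from by decide, show (2 - 1 : ZMod 3) = 1 from by decide]
    have hne : v k ≠ 0 := by rw [h]; decide
    have e1 : distO N 3 (Function.update v k 0) + 1 = distO N 3 v :=
      distO_update_zero v hne
    have e2 : distO N 3 (Function.update v k 1) = distO N 3 v :=
      distO_update_ne v hne 1 (by decide)
    rw [if_neg (show ¬ (distO N 3 v < distO N 3 (Function.update v k 0)) by omega), if_neg (show ¬ (distO N 3 v < distO N 3 (Function.update v k 1)) by omega),
      if_neg (show ¬ ((2 : ZMod 3) = 0) by decide)]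
    try ring

end Conc
section Comm

open Finset Function

variable {N : ℕ}

open Classical in
lemma aop_decomp (f : (Fin N → ZMod 3) → ℂ) (v : Fin N → ZMod 3) :
    Aop N 3 f v = Aplus N 3 f v + Aminus N 3 f v + Azero N 3 f v := by
  classical
  unfold Aop Aplus Aminus Azero
  rw [← Finset.sum_add_distrib, ← Finset.sum_add_distrib]
  refine Finset.sum_congr rfl fun w _ => ?_
  by_cases ha : adj N 3 v w
  · rcases lt_trichotomy (distO N 3 w) (distO N 3 v) with h1 | h1 | h1
    · rw [if_pos ha,
        if_pos (show adj N 3 v w ∧ distO N 3 w < distO N 3 v from ⟨ha, h1⟩),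
        if_neg (show ¬(adj N 3 v w ∧ distO N 3 v < distO N 3 w) from
          fun hc => by have := hc.2; omega),
        if_neg (show ¬(adj N 3 v w ∧ distO N 3 w = distO N 3 v) from
          fun hc => by have := hc.2; omega)]
      ring
    · rw [if_pos ha,
        if_neg (show ¬(adj N 3 v w ∧ distO N 3 w < distO N 3 v) from
          fun hc => by have := hc.2; omega),
        if_neg (show ¬(adj N 3 v w ∧ distO N 3 v < distO N 3 w) from
          fun hc => by have := hc.2; omega),
        if_pos (show adj N 3 v w ∧ distO N 3 w = distO N 3 v from ⟨ha, h1⟩)]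
      ring
    · rw [if_pos ha,
        if_neg (show ¬(adj N 3 v w ∧ distO N 3 w < distO N 3 v) from
          fun hc => by have := hc.2; omega),
        if_pos (show adj N 3 v w ∧ distO N 3 v < distO N 3 w from ⟨ha, h1⟩),
        if_neg (show ¬(adj N 3 v w ∧ distO N 3 w = distO N 3 v) from
          fun hc => by have := hc.2; omega)]
      ring
  · rw [if_neg ha, if_neg (fun hc : _ ∧ _ => ha hc.1),
      if_neg (fun hc : _ ∧ _ => ha hc.1), if_neg (fun hc : _ ∧ _ => ha hc.1)]
    ring

open Classical in
lemma aop_add (f g : (Fin N → ZMod 3) → ℂ) :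
    Aop N 3 (f + g) = Aop N 3 f + Aop N 3 g := by
  funext v
  show (∑ w : Fin N → ZMod 3, if adj N 3 v w then (f + g) w else 0)
    = (∑ w : Fin N → ZMod 3, if adj N 3 v w then f w else 0)
      + ∑ w : Fin N → ZMod 3, if adj N 3 v w then g w else 0
  rw [← Finset.sum_add_distrib]
  refine Finset.sum_congr rfl fun w _ => ?_
  split_ifs <;> simp

open Classical in
lemma aop_smul (c : ℂ) (f : (Fin N → ZMod 3) → ℂ) :
    Aop N 3 (c • f) = c • Aop N 3 f := by
  funext v
  show (∑ w : Fin N → ZMod 3, if adj N 3 v w then (c • f) w else 0)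
    = c * ∑ w : Fin N → ZMod 3, if adj N 3 v w then f w else 0
  rw [Finset.mul_sum]
  refine Finset.sum_congr rfl fun w _ => ?_
  split_ifs <;> simp

lemma aplus_smul (c : ℂ) (f : (Fin N → ZMod 3) → ℂ) :
    Aplus N 3 (c • f) = c • Aplus N 3 f := by
  funext v
  simp [aplus_eq, Finset.mul_sum]

lemma aplus_zero : Aplus N 3 (0 : (Fin N → ZMod 3) → ℂ) = 0 := by
  funext v
  simp [aplus_eq]

lemma filter_reflV (v : Fin N → ZMod 3) (k : Fin N) :
    Finset.univ.filter (fun j => reflV N 3 k v j ≠ 0)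
      = Finset.univ.filter (fun j => v j ≠ 0) := by
  classical
  ext j
  simp only [Finset.mem_filter, Finset.mem_univ, true_and]
  rcases eq_or_ne j k with rfl | hj
  · rw [reflV, Function.update_self]
    simp [neg_eq_zero]
  · rw [reflV, Function.update_of_ne hj]

lemma filter_update_zero_ne (v : Fin N → ZMod 3) (j : Fin N) :
    Finset.univ.filter (fun i => Function.update v j 0 i ≠ 0)
      = (Finset.univ.filter (fun i => v i ≠ 0)).erase j := by
  classical
  ext i
  simp only [Finset.mem_filter, Finset.mem_erase, Finset.mem_univ, true_and]
  rcases eq_or_ne i j with rfl | hij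
  · simp [Function.update_self]
  · simp [Function.update_of_ne hij, hij]

lemma filter_update_zero_eq (v : Fin N → ZMod 3) (j : Fin N) :
    Finset.univ.filter (fun i => Function.update v j 0 i = 0)
      = insert j (Finset.univ.filter (fun i => v i = 0)) := by
  classical
  ext i
  simp only [Finset.mem_filter, Finset.mem_insert, Finset.mem_univ, true_and]
  rcases eq_or_ne i j with rfl | hij
  · simp [Function.update_self]
  · simp [Function.update_of_ne hij, hij]

lemma filter_update_a_ne (v : Fin N → ZMod 3) (j : Fin N) (a : ZMod 3) (ha : a ≠ 0) :
    Finset.univ.filter (fun i => Function.update v j a i ≠ 0)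
      = insert j (Finset.univ.filter (fun i => v i ≠ 0)) := by
  classical
  ext i
  simp only [Finset.mem_filter, Finset.mem_insert, Finset.mem_univ, true_and]
  rcases eq_or_ne i j with rfl | hij
  · simp [Function.update_self, ha]
  · simp [Function.update_of_ne hij, hij]

lemma sum_erase_swap (S : Finset (Fin N)) (G : Fin N → Fin N → ℂ) :
    ∑ k ∈ S, ∑ j ∈ S.erase k, G k j = ∑ j ∈ S, ∑ k ∈ S.erase j, G k j := by
  classical
  calc ∑ k ∈ S, ∑ j ∈ S.erase k, G k j
      = ∑ k ∈ S, ∑ j ∈ S, if j ≠ k then G k j else 0 := by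
        refine Finset.sum_congr rfl fun k _ => ?_
        rw [← Finset.filter_ne' S k, Finset.sum_filter]
    _ = ∑ j ∈ S, ∑ k ∈ S, if j ≠ k then G k j else 0 := Finset.sum_comm
    _ = ∑ j ∈ S, ∑ k ∈ S.erase j, G k j := by
        refine Finset.sum_congr rfl fun j _ => ?_
        rw [← Finset.filter_ne' S j, Finset.sum_filter]
        exact Finset.sum_congr rfl fun k _ => if_congr ne_comm rfl rfl

lemma comm_zero_plus (f : (Fin N → ZMod 3) → ℂ) (v : Fin N → ZMod 3) :
    Azero N 3 (Aplus N 3 f) v = Aplus N 3 (Azero N 3 f) v + Aplus N 3 f v := by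
  classical
  rw [azero_eq, aplus_eq (Azero N 3 f), aplus_eq f]
  have hL : ∀ k ∈ Finset.univ.filter (fun j => v j ≠ 0),
      Aplus N 3 f (reflV N 3 k v)
        = f (Function.update v k 0)
          + ∑ j ∈ (Finset.univ.filter (fun j => v j ≠ 0)).erase k,
              f (Function.update (reflV N 3 k v) j 0) := by
    intro k hk
    rw [aplus_eq, filter_reflV, ← Finset.add_sum_erase _ _ hk]
    congr 2
    rw [reflV, Function.update_idem]
  have hR : ∀ j ∈ Finset.univ.filter (fun j => v j ≠ 0),
      Azero N 3 f (Function.update v j 0)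
        = ∑ k ∈ (Finset.univ.filter (fun j => v j ≠ 0)).erase j,
            f (reflV N 3 k (Function.update v j 0)) := by
    intro j _
    rw [azero_eq, filter_update_zero_ne]
  rw [Finset.sum_congr rfl hL, Finset.sum_congr rfl hR, Finset.sum_add_distrib, add_comm]
  congr 1
  rw [sum_erase_swap]
  refine Finset.sum_congr rfl fun j _ => Finset.sum_congr rfl fun k hk => ?_
  have hkj : k ≠ j := (Finset.mem_erase.mp hk).1
  congr 1
  rw [reflV, reflV, Function.update_of_ne hkj]
  exact Function.update_comm hkj _ _ _

lemma comm_minus_plus (f : (Fin N → ZMod 3) → ℂ) (v : Fin N → ZMod 3) :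
    Aminus N 3 (Aplus N 3 f) v + (distO N 3 v : ℂ) * f v + Azero N 3 f v
      = Aplus N 3 (Aminus N 3 f) v
        + 2 * (((Finset.univ.filter (fun k => v k = 0)).card : ℕ) : ℂ) * f v := by
  classical
  have hA : ∀ j ∈ Finset.univ.filter (fun k => v k = 0), ∀ a : ZMod 3, a ≠ 0 →
      Aplus N 3 f (Function.update v j a)
        = f v + ∑ k ∈ Finset.univ.filter (fun k => v k ≠ 0),
            f (Function.update (Function.update v k 0) j a) := by
    intro j hj a ha
    have hvj : v j = 0 := (Finset.mem_filter.mp hj).2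
    rw [aplus_eq, filter_update_a_ne v j a ha,
      Finset.sum_insert (by simp [Finset.mem_filter, hvj])]
    congr 1
    · rw [Function.update_idem, show (0 : ZMod 3) = v j from hvj.symm,
        Function.update_eq_self]
    · refine Finset.sum_congr rfl fun k hk => ?_
      have hk' : v k ≠ 0 := (Finset.mem_filter.mp hk).2
      have hkj : j ≠ k := fun hh => hk' (hh ▸ hvj)
      congr 1
      exact Function.update_comm hkj _ _ _
  have hB : ∀ k ∈ Finset.univ.filter (fun k => v k ≠ 0),
      Aminus N 3 f (Function.update v k 0)
        = (f v + f (reflV N 3 k v))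
          + ∑ j ∈ Finset.univ.filter (fun k => v k = 0),
              (f (Function.update (Function.update v k 0) j 1)
                + f (Function.update (Function.update v k 0) j 2)) := by
    intro k hk
    have hvk : v k ≠ 0 := (Finset.mem_filter.mp hk).2
    rw [aminus_eq, filter_update_zero_eq,
      Finset.sum_insert (by simp [Finset.mem_filter, hvk])]
    congr 1
    rw [Function.update_idem, Function.update_idem]
    rcases zmod3_cases (v k) with h | h | h
    · exact absurd h hvk
    · rw [show Function.update v k 1 = v from by rw [← h]; exact Function.update_eq_self k v,
        show Function.update v k 2 = reflV N 3 k v from by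
          rw [reflV, h, show -(1 : ZMod 3) = 2 from by decide]]
    · rw [show Function.update v k 2 = v from by rw [← h]; exact Function.update_eq_self k v,
        show Function.update v k 1 = reflV N 3 k v from by
          rw [reflV, h, show -(2 : ZMod 3) = 1 from by decide]]
      ring
  rw [aminus_eq (Aplus N 3 f) v, aplus_eq (Aminus N 3 f) v,
    Finset.sum_congr rfl (fun j hj => by
      rw [hA j hj 1 (by decide), hA j hj 2 (by decide)]),
    Finset.sum_congr rfl hB]
  simp only [Finset.sum_add_distrib, Finset.sum_const, nsmul_eq_mul]
  rw [azero_eq f v, distO_eq_card v]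
  rw [Finset.sum_comm (s := Finset.univ.filter (fun k => v k = 0))
        (t := Finset.univ.filter (fun k => v k ≠ 0))
        (f := fun j k => f (Function.update (Function.update v k 0) j 1)),
      Finset.sum_comm (s := Finset.univ.filter (fun k => v k = 0))
        (t := Finset.univ.filter (fun k => v k ≠ 0))
        (f := fun j k => f (Function.update (Function.update v k 0) j 2))]
  ring

end Comm
section Main

open Finset Function

variable {N : ℕ}

lemma supp_iter (r : ℕ) (f : (Fin N → ZMod 3) → ℂ)
    (hf : ∀ v, distO N 3 v ≠ r → f v = 0) (k : ℕ) :
    ∀ v, distO N 3 v ≠ r + k → (Aplus N 3)^[k] f v = 0 := by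
  induction k with
  | zero => simpa using hf
  | succ k ih =>
    intro v hv
    rw [Function.iterate_succ_apply', aplus_eq]
    refine Finset.sum_eq_zero fun j hj => ?_
    have hvj : v j ≠ 0 := (Finset.mem_filter.mp hj).2
    have h1 := distO_update_zero v hvj
    exact ih _ (by omega)

lemma eig_iter (r : ℕ) (lam : ℂ) (f : (Fin N → ZMod 3) → ℂ)
    (hz : Azero N 3 f = lam • f) (k : ℕ) :
    Azero N 3 ((Aplus N 3)^[k] f) = (lam + k) • ((Aplus N 3)^[k] f) := by
  induction k with
  | zero => simpa using hz
  | succ k ih =>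
    rw [Function.iterate_succ_apply']
    funext v
    rw [comm_zero_plus, ih, aplus_smul]
    simp only [Pi.smul_apply, smul_eq_mul, Pi.add_apply]
    push_cast
    ring

lemma step_lemma (s : ℕ) (g : (Fin N → ZMod 3) → ℂ)
    (hg : ∀ v, distO N 3 v ≠ s → g v = 0) (mu : ℂ)
    (hz : Azero N 3 g = mu • g) (h : (Fin N → ZMod 3) → ℂ)
    (hm : Aminus N 3 g = h) :
    Aminus N 3 (Aplus N 3 g)
      = Aplus N 3 h + (2 * ((N : ℂ) - s) - s - mu) • g := by
  classical
  funext v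
  have H := comm_minus_plus g v
  rw [hm] at H
  have hzv : Azero N 3 g v = mu * g v := by rw [hz]; simp
  rw [hzv] at H
  simp only [Pi.add_apply, Pi.smul_apply, smul_eq_mul]
  by_cases hgv : g v = 0
  · rw [hgv] at H ⊢
    simp only [mul_zero, add_zero] at H ⊢
    exact H
  · have hd : distO N 3 v = s := by
      by_contra hh
      exact hgv (hg v hh)
    have hfil : (Finset.univ.filter (fun k => ¬ v k = 0)).card
        = (Finset.univ.filter (fun k => v k ≠ 0)).card := rfl
    have hcount := Finset.card_filter_add_card_filter_not
      (s := (Finset.univ : Finset (Fin N))) (p := fun k => v k = 0)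
    rw [distO_eq_card v] at hd
    rw [hfil, hd, Finset.card_univ, Fintype.card_fin] at hcount
    have hcard : ((Finset.univ.filter (fun k => v k = 0)).card : ℂ) = (N : ℂ) - s := by
      have h2 : (((Finset.univ.filter (fun k => v k = 0)).card : ℕ) : ℂ) + (s : ℂ)
          = (N : ℂ) := by exact_mod_cast hcount
      linear_combination h2
    rw [distO_eq_card v, hd, hcard] at H
    linear_combination H

lemma lower_iter (r : ℕ) (lam : ℂ) (f : (Fin N → ZMod 3) → ℂ)
    (hf : f ∈ Wspace N r lam) (k : ℕ) :
    ∃ c : ℂ, Aminus N 3 ((Aplus N 3)^[k + 1] f) = c • ((Aplus N 3)^[k] f) := by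
  obtain ⟨hf1, hf2, hf3⟩ := hf
  induction k with
  | zero =>
    refine ⟨2 * ((N : ℂ) - r) - r - lam, ?_⟩
    have h := step_lemma r f hf1 lam hf3 0 hf2
    rw [Function.iterate_one, Function.iterate_zero_apply, h, aplus_zero, zero_add]
  | succ k ih =>
    obtain ⟨c, hc⟩ := ih
    refine ⟨c + (2 * ((N : ℂ) - (r + (k + 1) : ℕ)) - ((r + (k + 1) : ℕ) : ℂ)
      - (lam + ((k + 1 : ℕ) : ℂ))), ?_⟩
    have h := step_lemma (r + (k + 1)) ((Aplus N 3)^[k + 1] f)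
      (supp_iter r f hf1 (k + 1)) (lam + ((k + 1 : ℕ) : ℂ))
      (eig_iter r lam f hf3 (k + 1)) (c • ((Aplus N 3)^[k] f)) hc
    rw [Function.iterate_succ_apply' (Aplus N 3) (k + 1), h, aplus_smul,
      ← Function.iterate_succ_apply' (Aplus N 3) k f]
    funext v
    simp only [Pi.add_apply, Pi.smul_apply, smul_eq_mul]
    ring

lemma aop_mem (r : ℕ) (lam : ℂ) (f : (Fin N → ZMod 3) → ℂ)
    (hf : f ∈ Wspace N r lam) (k : ℕ) :
    Aop N 3 ((Aplus N 3)^[k] f) ∈ Vspace N r lam := by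
  have hgen : ∀ m : ℕ, (Aplus N 3)^[m] f ∈ Vspace N r lam := fun m =>
    Submodule.subset_span ⟨m, f, hf, rfl⟩
  have hdecomp : Aop N 3 ((Aplus N 3)^[k] f)
      = (Aplus N 3)^[k + 1] f + Aminus N 3 ((Aplus N 3)^[k] f)
        + (lam + k) • ((Aplus N 3)^[k] f) := by
    funext v
    rw [Pi.add_apply, Pi.add_apply, aop_decomp, Function.iterate_succ_apply',
      eig_iter r lam f hf.2.2 k]
  rw [hdecomp]
  refine Submodule.add_mem _ (Submodule.add_mem _ (hgen _) ?_)
    (Submodule.smul_mem _ _ (hgen _))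
  cases k with
  | zero =>
    rw [show (Aplus N 3)^[0] f = f from rfl, hf.2.1]
    exact Submodule.zero_mem _
  | succ k =>
    obtain ⟨c, hc⟩ := lower_iter r lam f hf k
    rw [hc]
    exact Submodule.smul_mem _ _ (hgen _)

end Main

/-- `V_{r,λ}` is invariant under the adjacency operator on `C_3^N`. -/
theorem adjacency_invariant_C3 (N r : ℕ) (hN : 1 ≤ N) (lam : ℂ) :
    ∀ g ∈ Vspace N r lam, Aop N 3 g ∈ Vspace N r lam := by
  intro g hg
  have hg' : g ∈ Submodule.span ℂ
      {g | ∃ k : ℕ, ∃ f ∈ Wspace N r lam, g = (Aplus N 3)^[k] f} := hg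
  refine Submodule.span_induction
    (p := fun x _ => Aop N 3 x ∈ Vspace N r lam) ?_ ?_ ?_ ?_ hg'
  · rintro x ⟨k, f, hf, rfl⟩
    exact aop_mem r lam f hf k
  · show Aop N 3 (0 : (Fin N → ZMod 3) → ℂ) ∈ Vspace N r lam
    have h0 : Aop N 3 (0 : (Fin N → ZMod 3) → ℂ) = 0 := by
      rw [show (0 : (Fin N → ZMod 3) → ℂ) = (0 : ℂ) • 0 from by simp, aop_smul]
      simp
    rw [h0]
    exact Submodule.zero_mem _
  · intro x y _ _ ihx ihy
    show Aop N 3 (x + y) ∈ Vspace N r lam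
    rw [aop_add]
    exact Submodule.add_mem _ ihx ihy
  · intro a x _ ih
    show Aop N 3 (a • x) ∈ Vspace N r lam
    rw [aop_smul]
    exact Submodule.smul_mem _ _ ih
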